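/- arXiv:1509.08398 — 4 statements merged into one kernel-verified Lean document; each statement's English description precedes it below -/
import Mathlib

section
/- Let d ≥ 1 and let N be an integer with N ≥ d. Let ξ_1, …, ξ_N, ξ_{N+1} be i.i.d. random vectors in ℝ^d (defined on a common probability space), and assume that the unbiased empirical covariance matrix S_N of the first N samples is almost surely nonsingular. Then for every real λ > 0, the probability that (ξ_{N+1} − μ_N)ᵀ S_N^{-1} (ξ_{N+1} − μ_N) ≥ λ² is at most min{1, (1/(N+1))·⌊ d(N+1)(N² − 1 + Nλ²) / (N²λ²) ⌋}, where ⌊·⌋ is the floor function. -/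
open Matrix MeasureTheory ProbabilityTheory Finset

namespace EMC
variable {d n : ℕ}

noncomputable def pm (d n : ℕ) (x : Fin n → Fin d → ℝ) : Fin d → ℝ :=
  (n : ℝ)⁻¹ • ∑ j, x j

noncomputable def pT (d n : ℕ) (x : Fin n → Fin d → ℝ) : Matrix (Fin d) (Fin d) ℝ :=
  ∑ j, vecMulVec (x j - pm d n x) (x j - pm d n x)

noncomputable def pD (d n : ℕ) (j : Fin n) (x : Fin n → Fin d → ℝ) : ℝ :=
  (x j - pm d n x) ⬝ᵥ ((pT d n x)⁻¹ *ᵥ (x j - pm d n x))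

lemma vmv_add_smul (y c : Fin d → ℝ) (r : ℝ) :
    vecMulVec (y + r • c) (y + r • c) =
      vecMulVec y y + r • vecMulVec y c + r • vecMulVec c y + (r^2) • vecMulVec c c := by
  ext i k
  simp [vecMulVec_apply, Matrix.add_apply, Matrix.smul_apply, smul_eq_mul]
  ring

lemma vmv_sum_left (s : Finset (Fin n)) (y : Fin n → Fin d → ℝ) (c : Fin d → ℝ) :
    ∑ i ∈ s, vecMulVec (y i) c = vecMulVec (∑ i ∈ s, y i) c := by
  ext i k
  simp [vecMulVec_apply, Matrix.sum_apply, Finset.sum_apply, Finset.sum_mul]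

lemma vmv_sum_right (s : Finset (Fin n)) (y : Fin n → Fin d → ℝ) (c : Fin d → ℝ) :
    ∑ i ∈ s, vecMulVec c (y i) = vecMulVec c (∑ i ∈ s, y i) := by
  ext i k
  simp [vecMulVec_apply, Matrix.sum_apply, Finset.sum_apply, Finset.mul_sum]

lemma vmv_neg_left (a c : Fin d → ℝ) : vecMulVec (-a) c = -vecMulVec a c := by
  ext i k; simp [vecMulVec_apply]

lemma vmv_neg_right (a c : Fin d → ℝ) : vecMulVec c (-a) = -vecMulVec c a := by
  ext i k; simp [vecMulVec_apply]

lemma vmv_mulVec (a b v : Fin d → ℝ) :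
    vecMulVec a b *ᵥ v = (b ⬝ᵥ v) • a := by
  ext i
  simp [vecMulVec_apply, mulVec, dotProduct, Finset.sum_mul, Finset.mul_sum, mul_comm,
    mul_left_comm]

lemma psd_vmv (v : Fin d → ℝ) : PosSemidef (vecMulVec v v) := by
  refine PosSemidef.of_dotProduct_mulVec_nonneg ?_ ?_
  · ext i k
    simp [IsHermitian, conjTranspose_apply, vecMulVec_apply, mul_comm]
  · intro x
    have : star x ⬝ᵥ (vecMulVec v v *ᵥ x) = (v ⬝ᵥ x)^2 := by
      rw [vmv_mulVec]
      simp [dotProduct, Finset.mul_sum, Finset.sum_mul, mul_comm, mul_left_comm, sq]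
    rw [this]
    positivity

lemma psd_smul {M : Matrix (Fin d) (Fin d) ℝ} (hM : PosSemidef M) {r : ℝ} (hr : 0 ≤ r) :
    PosSemidef (r • M) := by
  refine PosSemidef.of_dotProduct_mulVec_nonneg ?_ ?_
  · show (r • M)ᴴ = r • M
    rw [conjTranspose_smul, star_trivial, hM.1.eq]
  · intro x
    have h := hM.dotProduct_mulVec_nonneg x
    simp only [smul_mulVec, dotProduct_smul, smul_eq_mul]
    positivity

lemma quad_eq_trace (B : Matrix (Fin d) (Fin d) ℝ) (c : Fin d → ℝ) :
    c ⬝ᵥ (B *ᵥ c) = Matrix.trace (B * vecMulVec c c) := by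
  simp only [dotProduct, mulVec, Matrix.trace, Matrix.diag, Matrix.mul_apply, vecMulVec_apply,
    Finset.mul_sum, Finset.sum_mul]
  refine Finset.sum_congr rfl fun i _ => Finset.sum_congr rfl fun k _ => by ring

lemma psd_sum (s : Finset (Fin n)) (f : Fin n → Matrix (Fin d) (Fin d) ℝ)
    (h : ∀ i ∈ s, PosSemidef (f i)) : PosSemidef (∑ i ∈ s, f i) :=
  Finset.sum_induction f _ (fun _ _ ha hb => ha.add hb) PosSemidef.zero h

lemma psd_posDef_of_isUnit {M : Matrix (Fin d) (Fin d) ℝ} (hM : PosSemidef M)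
    (hU : IsUnit M) : PosDef M := by
  refine PosDef.of_dotProduct_mulVec_pos hM.1 fun z hz => lt_of_le_of_ne (hM.dotProduct_mulVec_nonneg z) fun heq => hz ?_
  have hz0 : M *ᵥ z = 0 := (hM.dotProduct_mulVec_zero_iff z).mp heq.symm
  have hinj := (Matrix.mulVec_injective_iff_isUnit.mpr hU)
  have : M *ᵥ z = M *ᵥ 0 := by simpa using hz0
  exact hinj this

/-- Key deterministic lemma. -/
lemma key (d N : ℕ) (hN2 : 2 ≤ N) (x : Fin (N+1) → Fin d → ℝ)
    (μ : Fin d → ℝ) (S : Matrix (Fin d) (Fin d) ℝ)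
    (hμ : μ = (N:ℝ)⁻¹ • ∑ i : Fin N, x i.castSucc)
    (hS : S = ((N:ℝ)-1)⁻¹ •
      ∑ i : Fin N, vecMulVec (x i.castSucc - μ) (x i.castSucc - μ))
    (hU : IsUnit S) :
    PosDef (pT d (N+1) x) ∧
    ∀ lam : ℝ, 0 < lam →
      lam^2 ≤ (x (Fin.last N) - μ) ⬝ᵥ (S⁻¹ *ᵥ (x (Fin.last N) - μ)) →
      lam^2 / ((((N:ℝ)+1)/N)^2 * ((N:ℝ)-1) + (((N:ℝ)+1)/N) * lam^2)
        ≤ pD d (N+1) (Fin.last N) x := by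
  have hN0 : (N:ℝ) ≠ 0 := by
    have : (0:ℝ) < N := by exact_mod_cast Nat.lt_of_lt_of_le (by norm_num) hN2
    exact this.ne'
  have hNpos : (0:ℝ) < N := by exact_mod_cast Nat.lt_of_lt_of_le (by norm_num) hN2
  have hN1 : ((N:ℝ) - 1) ≠ 0 := by
    have : (2:ℝ) ≤ N := by exact_mod_cast hN2
    nlinarith
  have hN1pos : (0:ℝ) < (N:ℝ) - 1 := by
    have : (2:ℝ) ≤ N := by exact_mod_cast hN2
    linarith
  set α : ℝ := ((N:ℝ)+1)/N with hα_def
  have hαpos : 0 < α := by positivity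
  set m : Fin d → ℝ := pm d (N+1) x with hm_def
  set c : Fin d → ℝ := x (Fin.last N) - m with hc_def
  set A : Matrix (Fin d) (Fin d) ℝ :=
    ∑ i : Fin N, vecMulVec (x i.castSucc - μ) (x i.castSucc - μ) with hA_def
  -- sum splitting
  have hsplit : ∑ j : Fin (N+1), x j = (∑ i : Fin N, x i.castSucc) + x (Fin.last N) :=
    Fin.sum_univ_castSucc x
  have hmval : m = (((N:ℝ)+1))⁻¹ • ((∑ i : Fin N, x i.castSucc) + x (Fin.last N)) := by
    rw [hm_def, pm, hsplit]; push_cast; ring_nf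
  -- pm - μ = N⁻¹ • c
  have hmμ : m - μ = (N:ℝ)⁻¹ • c := by
    rw [hc_def, hmval, hμ]
    match_scalars <;> field_simp <;> ring
  have hαc : x (Fin.last N) - μ = α • c := by
    rw [hc_def, hmval, hμ, hα_def]
    match_scalars <;> field_simp <;> ring
  -- sum of centered vectors
  have hy0 : ∑ j : Fin (N+1), (x j - m) = 0 := by
    rw [Finset.sum_sub_distrib, Finset.sum_const, Finset.card_univ, Fintype.card_fin, hm_def, pm]
    have hn0 : ((N:ℝ)+1) ≠ 0 := by positivity
    match_scalars
    field_simp; ring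
  have hys : ∑ i : Fin N, (x i.castSucc - m) = -c := by
    have := Fin.sum_univ_castSucc (fun j => x j - m)
    rw [hy0] at this
    have h2 : x (Fin.last N) - m = c := rfl
    rw [h2] at this
    exact eq_neg_of_add_eq_zero_left this.symm
  -- T = A + α • c cᵀ
  have hterm : ∀ i : Fin N, x i.castSucc - μ = (x i.castSucc - m) + (N:ℝ)⁻¹ • c := by
    intro i
    rw [← hmμ]; abel
  have hTA : pT d (N+1) x = A + α • vecMulVec c c := by
    have hT1 : pT d (N+1) x
        = (∑ i : Fin N, vecMulVec (x i.castSucc - m) (x i.castSucc - m)) + vecMulVec c c := by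
      rw [pT]
      exact Fin.sum_univ_castSucc (fun j => vecMulVec (x j - pm d (N+1) x) (x j - pm d (N+1) x))
    have hA1 : A = (∑ i : Fin N, vecMulVec (x i.castSucc - m) (x i.castSucc - m))
        - (N:ℝ)⁻¹ • vecMulVec c c := by
      rw [hA_def]
      have : ∀ i : Fin N, vecMulVec (x i.castSucc - μ) (x i.castSucc - μ)
          = vecMulVec (x i.castSucc - m) (x i.castSucc - m)
            + (N:ℝ)⁻¹ • vecMulVec (x i.castSucc - m) c
            + (N:ℝ)⁻¹ • vecMulVec c (x i.castSucc - m)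
            + ((N:ℝ)⁻¹^2) • vecMulVec c c := by
        intro i; rw [hterm i, vmv_add_smul]
      rw [Finset.sum_congr rfl (fun i _ => this i)]
      rw [Finset.sum_add_distrib, Finset.sum_add_distrib, Finset.sum_add_distrib,
        ← Finset.smul_sum, ← Finset.smul_sum, vmv_sum_left, vmv_sum_right, hys,
        vmv_neg_left, vmv_neg_right, Finset.sum_const, Finset.card_univ, Fintype.card_fin]
      match_scalars <;> field_simp <;> ring
    rw [hT1, hA1, hα_def]
    match_scalars <;> field_simp <;> ring
  -- A in terms of S
  have hdetS : IsUnit S.det := (Matrix.isUnit_iff_isUnit_det S).mp hU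
  have hdetSne : S.det ≠ 0 := by
    intro h; rw [h] at hdetS; exact (by simpa using hdetS : False)
  have hAS : A = ((N:ℝ)-1) • S := by
    rw [hS, smul_smul, mul_inv_cancel₀ hN1, one_smul]
  have hdetA : IsUnit A.det := by
    rw [hAS, Matrix.det_smul]
    exact (IsUnit.pow _ (isUnit_iff_ne_zero.mpr hN1)).mul hdetS
  have hA_psd : PosSemidef A := by
    rw [hA_def]
    exact psd_sum _ _ (fun i _ => psd_vmv _)
  have hA_pd : PosDef A := psd_posDef_of_isUnit hA_psd ((Matrix.isUnit_iff_isUnit_det A).mpr hdetA)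
  have hT_pd : PosDef (pT d (N+1) x) := by
    rw [hTA]
    exact hA_pd.add_posSemidef (psd_smul (psd_vmv c) hαpos.le)
  refine ⟨hT_pd, ?_⟩
  intro lam hlam hQ
  -- w := c A⁻¹ c
  set v : Fin d → ℝ := A⁻¹ *ᵥ c with hv_def
  set w : ℝ := c ⬝ᵥ v with hw_def
  have hw0 : 0 ≤ w := by
    have := hA_pd.inv.posSemidef.dotProduct_mulVec_nonneg c
    simpa [hw_def, hv_def, star_trivial] using this
  -- S⁻¹ = (N-1) • A⁻¹
  have hSinv : S⁻¹ = ((N:ℝ)-1) • A⁻¹ := by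
    apply Matrix.inv_eq_left_inv
    rw [hS, Matrix.smul_mul, Matrix.mul_smul, smul_smul, Matrix.nonsing_inv_mul A hdetA]
    rw [mul_inv_cancel₀ hN1, one_smul]
  -- Q = α² (N-1) w
  have hQw : (x (Fin.last N) - μ) ⬝ᵥ (S⁻¹ *ᵥ (x (Fin.last N) - μ))
      = α^2 * ((N:ℝ)-1) * w := by
    rw [hαc, hSinv, smul_mulVec, mulVec_smul, smul_dotProduct, dotProduct_smul,
      dotProduct_smul]
    simp only [smul_eq_mul, hw_def, hv_def]
    ring
  rw [hQw] at hQ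
  -- D = w / (1 + α w)
  have hs0 : (0:ℝ) < 1 + α * w := by nlinarith
  have hTu : pT d (N+1) x *ᵥ ((1 + α * w)⁻¹ • v) = c := by
    rw [mulVec_smul, hTA, add_mulVec, smul_mulVec, vmv_mulVec]
    have hAv : A *ᵥ v = c := by
      rw [hv_def, mulVec_mulVec, Matrix.mul_nonsing_inv A hdetA, one_mulVec]
    rw [hAv, ← hw_def]
    match_scalars <;> (field_simp [hs0.ne']; try ring)
  have hdetT : IsUnit (pT d (N+1) x).det := (Matrix.isUnit_iff_isUnit_det _).mp hT_pd.isUnit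
  have hTinvc : (pT d (N+1) x)⁻¹ *ᵥ c = (1 + α * w)⁻¹ • v := by
    conv_lhs => rw [← hTu]
    rw [mulVec_mulVec, Matrix.nonsing_inv_mul _ hdetT, one_mulVec]
  have hDval : pD d (N+1) (Fin.last N) x = (1 + α * w)⁻¹ * w := by
    rw [pD, ← hm_def, ← hc_def, hTinvc, dotProduct_smul, smul_eq_mul, hw_def]
  rw [hDval]
  -- final inequality
  have hβ : (0:ℝ) < α^2 * ((N:ℝ)-1) := by positivity
  rw [div_le_iff₀ (by positivity)]
  have h1 : (1 + α * w)⁻¹ * w * (α ^ 2 * (↑N - 1) + α * lam ^ 2)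
      = (w * (α ^ 2 * (↑N - 1) + α * lam ^ 2)) / (1 + α * w) := by ring
  rw [h1, le_div_iff₀ hs0]
  nlinarith [hQ, hw0, hαpos.le, hlam.le]


lemma sum_pD (x : Fin n → Fin d → ℝ) (hT : PosDef (pT d n x)) :
    ∑ j, pD d n j x = d := by
  have hdet := (Matrix.isUnit_iff_isUnit_det _).mp hT.isUnit
  simp only [pD, quad_eq_trace]
  rw [← Matrix.trace_sum, ← Finset.mul_sum]
  have hpt : ∑ j, vecMulVec (x j - pm d n x) (x j - pm d n x) = pT d n x := rfl
  rw [hpt, Matrix.nonsing_inv_mul _ hdet, Matrix.trace_one]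
  simp

lemma pD_nonneg (x : Fin n → Fin d → ℝ) (hT : PosDef (pT d n x)) (j : Fin n) :
    0 ≤ pD d n j x := by
  have := hT.inv.posSemidef.dotProduct_mulVec_nonneg (x j - pm d n x)
  simpa [pD, star_trivial] using this

lemma count_le (x : Fin n → Fin d → ℝ) (hT : PosDef (pT d n x)) {t : ℝ} (ht : 0 < t) :
    ((Finset.univ.filter (fun j => t ≤ pD d n j x)).card : ℝ) * t ≤ d := by
  have h1 : ((Finset.univ.filter (fun j => t ≤ pD d n j x)).card : ℝ) * t
      = ∑ _j ∈ Finset.univ.filter (fun j => t ≤ pD d n j x), t := by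
    rw [Finset.sum_const, nsmul_eq_mul]
  rw [h1]
  have h2 : ∑ j ∈ Finset.univ.filter (fun j => t ≤ pD d n j x), t
      ≤ ∑ j ∈ Finset.univ.filter (fun j => t ≤ pD d n j x), pD d n j x :=
    Finset.sum_le_sum fun j hj => (Finset.mem_filter.mp hj).2
  have h3 : ∑ j ∈ Finset.univ.filter (fun j => t ≤ pD d n j x), pD d n j x
      ≤ ∑ j, pD d n j x :=
    Finset.sum_le_sum_of_subset_of_nonneg (Finset.filter_subset _ _)
      (fun j _ _ => pD_nonneg x hT j)
  rw [sum_pD x hT] at h3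
  linarith

lemma pm_comp (x : Fin n → Fin d → ℝ) (σ : Equiv.Perm (Fin n)) :
    pm d n (x ∘ σ) = pm d n x := by
  rw [pm, pm]
  congr 1
  exact Equiv.sum_comp σ x

lemma pT_comp (x : Fin n → Fin d → ℝ) (σ : Equiv.Perm (Fin n)) :
    pT d n (x ∘ σ) = pT d n x := by
  rw [pT, pT, pm_comp]
  exact Equiv.sum_comp σ (fun j => vecMulVec (x j - pm d n x) (x j - pm d n x))

lemma pD_comp (x : Fin n → Fin d → ℝ) (σ : Equiv.Perm (Fin n)) (j : Fin n) :
    pD d n j (x ∘ σ) = pD d n (σ j) x := by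
  rw [pD, pD, pm_comp, pT_comp]
  rfl


lemma continuous_pm : Continuous (pm d n) := by
  apply continuous_pi
  intro i
  have : (fun x : Fin n → Fin d → ℝ => pm d n x i)
      = fun x => (n:ℝ)⁻¹ * ∑ j, x j i := by
    funext x
    simp [pm, Finset.sum_apply]
  rw [this]
  exact continuous_const.mul (continuous_finset_sum _ fun j _ =>
    (continuous_apply i).comp (continuous_apply j))

lemma continuous_pT : Continuous (pT d n) := by
  apply continuous_matrix
  intro i k
  have : (fun x : Fin n → Fin d → ℝ => pT d n x i k)
      = fun x => ∑ j, (x j i - pm d n x i) * (x j k - pm d n x k) := by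
    funext x
    simp [pT, Matrix.sum_apply, vecMulVec_apply]
  rw [this]
  refine continuous_finset_sum _ fun j _ => Continuous.mul ?_ ?_
  · exact (((continuous_apply i).comp (continuous_apply j)).sub
      (((continuous_apply i)).comp continuous_pm))
  · exact (((continuous_apply k).comp (continuous_apply j)).sub
      (((continuous_apply k)).comp continuous_pm))

lemma measurable_pTinv_entry (i k : Fin d) :
    Measurable (fun x : Fin n → Fin d → ℝ => (pT d n x)⁻¹ i k) := by
  have hdet : Measurable fun x : Fin n → Fin d → ℝ => ((pT d n x).det)⁻¹ :=
    (Continuous.matrix_det continuous_pT).measurable.inv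
  have hadj : Measurable fun x : Fin n → Fin d → ℝ => (pT d n x).adjugate i k :=
    ((Continuous.matrix_adjugate continuous_pT).matrix_elem i k).measurable
  have : (fun x : Fin n → Fin d → ℝ => (pT d n x)⁻¹ i k)
      = fun x => ((pT d n x).det)⁻¹ * (pT d n x).adjugate i k := by
    funext x
    rw [Matrix.inv_def, Ring.inverse_eq_inv']
    simp [Matrix.smul_apply]
  rw [this]
  exact hdet.mul hadj

lemma measurable_pD (j : Fin n) : Measurable (pD d n j) := by
  have hv : Measurable fun x : Fin n → Fin d → ℝ => x j - pm d n x :=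
    (measurable_pi_apply j).sub continuous_pm.measurable
  have hvi : ∀ i : Fin d, Measurable fun x : Fin n → Fin d → ℝ => x j i - pm d n x i :=
    fun i => (measurable_pi_apply i).comp hv
  have : pD d n j = fun x =>
      ∑ i, (x j i - pm d n x i) * ∑ k, (pT d n x)⁻¹ i k * (x j k - pm d n x k) := by
    funext x
    simp [pD, dotProduct, mulVec, Pi.sub_apply]
  rw [this]
  refine Finset.measurable_sum _ fun i _ => (hvi i).mul ?_
  refine Finset.measurable_sum _ fun k _ => Measurable.mul ?_ (hvi k)
  exact measurable_pTinv_entry i k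


section Prob
variable {Ω : Type*} [MeasureSpace Ω] [IsProbabilityMeasure (ℙ : Measure Ω)]

lemma map_eq_pi (ξ : Fin n → Ω → (Fin d → ℝ)) (i0 : Fin n) (hmeas : ∀ i, Measurable (ξ i))
    (hindep : iIndepFun ξ ℙ)
    (hident : ∀ i j, IdentDistrib (ξ i) (ξ j) ℙ ℙ) :
    Measure.map (fun ω (j : Fin n) => ξ j ω) ℙ
      = Measure.pi (fun _ : Fin n => Measure.map (ξ i0) ℙ) := by
  haveI : IsProbabilityMeasure (Measure.map (ξ i0) ℙ) :=
    Measure.isProbabilityMeasure_map (hmeas i0).aemeasurable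
  have hX : Measurable (fun ω (j : Fin n) => ξ j ω) :=
    measurable_pi_lambda _ hmeas
  refine (Measure.pi_eq fun s hs => ?_).symm
  rw [Measure.map_apply hX (MeasurableSet.univ_pi hs)]
  have hpre : (fun ω (j : Fin n) => ξ j ω) ⁻¹' (Set.pi Set.univ s) = ⋂ j, ξ j ⁻¹' s j := by
    ext ω; simp [Set.mem_pi]
  rw [hpre, hindep.meas_iInter (fun j => ⟨s j, hs j, rfl⟩)]
  refine Finset.prod_congr rfl fun j _ => ?_
  rw [← Measure.map_apply (hmeas j) (hs j), (hident j i0).map_eq]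

lemma perm_invariant (ν : Measure (Fin d → ℝ)) [IsProbabilityMeasure ν]
    (σ : Equiv.Perm (Fin n)) :
    Measure.map (fun y : Fin n → Fin d → ℝ => y ∘ σ) (Measure.pi fun _ => ν)
      = Measure.pi (fun _ => ν) := by
  have hσ : Measurable (fun y : Fin n → Fin d → ℝ => y ∘ σ) :=
    measurable_pi_lambda _ fun j => measurable_pi_apply (σ j)
  refine (Measure.pi_eq fun s hs => ?_).symm
  rw [Measure.map_apply hσ (MeasurableSet.univ_pi hs)]
  have hpre : (fun y : Fin n → Fin d → ℝ => y ∘ σ) ⁻¹' (Set.pi Set.univ s)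
      = Set.pi Set.univ (fun j => s (σ.symm j)) := by
    ext y
    simp only [Set.mem_preimage, Set.mem_pi, Set.mem_univ, forall_true_left, Function.comp]
    constructor
    · intro h j; simpa using h (σ.symm j)
    · intro h j; simpa using h (σ j)
  rw [hpre, Measure.pi_pi]
  exact Equiv.prod_comp σ.symm (fun j => ν (s j))

end Prob
end EMC

open EMC

/-- **Theorem 1.** Empirical multivariate Chebyshev inequality: given `N+1`
i.i.d. random vectors in `ℝ^d` (with `N ≥ d ≥ 1`) whose unbiased empirical covariance `S_N` of
the first `N` samples is a.s. nonsingular, for every `λ > 0` the probability that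
`(ξ_{N+1} − μ_N)ᵀ S_N⁻¹ (ξ_{N+1} − μ_N) ≥ λ²` is at most
`min{1, (1/(N+1))·⌊d(N+1)(N²−1+Nλ²)/(N²λ²)⌋}`. -/
theorem empirical_multivariate_chebyshev {Ω : Type*} [MeasureSpace Ω]
    [IsProbabilityMeasure (ℙ : Measure Ω)]
    (d N : ℕ) (hd : 1 ≤ d) (hN : d ≤ N)
    (ξ : Fin (N + 1) → Ω → (Fin d → ℝ))
    (hmeas : ∀ i, Measurable (ξ i))
    (hindep : iIndepFun ξ ℙ)
    (hident : ∀ i j, IdentDistrib (ξ i) (ξ j) ℙ ℙ)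
    (μN : Ω → (Fin d → ℝ))
    (hμN : ∀ ω, μN ω = (N : ℝ)⁻¹ • ∑ i : Fin N, ξ i.castSucc ω)
    (SN : Ω → Matrix (Fin d) (Fin d) ℝ)
    (hSN : ∀ ω, SN ω = ((N : ℝ) - 1)⁻¹ •
      ∑ i : Fin N, vecMulVec (ξ i.castSucc ω - μN ω) (ξ i.castSucc ω - μN ω))
    (hns : ∀ᵐ ω ∂(ℙ : Measure Ω), IsUnit (SN ω))
    (lam : ℝ) (hlam : 0 < lam) :
    ℙ {ω | lam ^ 2 ≤
        (ξ (Fin.last N) ω - μN ω) ⬝ᵥ ((SN ω)⁻¹ *ᵥ (ξ (Fin.last N) ω - μN ω))}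
      ≤ ENNReal.ofReal (min 1
          (((N : ℝ) + 1)⁻¹ *
            (⌊((d : ℝ) * ((N : ℝ) + 1) * ((N : ℝ) ^ 2 - 1 + (N : ℝ) * lam ^ 2))
                / ((N : ℝ) ^ 2 * lam ^ 2)⌋ : ℤ))) := by
  classical
  haveI : Nonempty (Fin d) := Fin.pos_iff_nonempty.mp hd
  rcases lt_or_ge N 2 with hNlt | hN2
  · -- then N = 1 and hns is contradictory
    interval_cases N
    · omega
    · exfalso
      have hzero : ∀ ω, SN ω = 0 := fun ω => by
        rw [hSN ω]; norm_num
      have hFalse : ∀ᵐ ω ∂(ℙ : Measure Ω), False := by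
        filter_upwards [hns] with ω hω
        rw [hzero ω] at hω
        have hdet := (Matrix.isUnit_iff_isUnit_det _).mp hω
        rw [Matrix.det_zero] at hdet
        simpa using hdet
      rw [ae_iff] at hFalse
      simp only [not_false_iff, Set.setOf_true] at hFalse
      rw [measure_univ] at hFalse
      exact one_ne_zero hFalse
  -- main case
  have hNpos : (0:ℝ) < N := by
    have : (2:ℝ) ≤ N := by exact_mod_cast hN2
    linarith
  have hN0 : (N:ℝ) ≠ 0 := hNpos.ne'
  have hN1pos : (0:ℝ) < (N:ℝ) - 1 := by
    have : (2:ℝ) ≤ N := by exact_mod_cast hN2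
    linarith
  set α : ℝ := ((N:ℝ)+1)/N with hα_def
  have hαpos : 0 < α := by positivity
  set t : ℝ := lam^2 / (α^2*((N:ℝ)-1) + α*lam^2) with ht_def
  have htpos : 0 < t := by
    apply div_pos (by positivity)
    positivity
  set r : ℝ := ((d : ℝ) * ((N : ℝ) + 1) * ((N : ℝ) ^ 2 - 1 + (N : ℝ) * lam ^ 2))
      / ((N : ℝ) ^ 2 * lam ^ 2) with hr_def
  have hfrac : (d:ℝ)/t = r := by
    rw [hr_def, ht_def, hα_def]
    field_simp
    ring
  set k : ℤ := ⌊r⌋ with hk_def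
  have hr0 : 0 ≤ r := by
    rw [← hfrac]; positivity
  have hk0 : 0 ≤ k := Int.floor_nonneg.mpr hr0
  set K : ℕ := k.toNat with hK_def
  have hkK : (K:ℤ) = k := Int.toNat_of_nonneg hk0
  set X : Ω → (Fin (N+1) → Fin d → ℝ) := fun ω j => ξ j ω with hX_def
  have hX : Measurable X := measurable_pi_lambda _ hmeas
  set B : Fin (N+1) → Set (Fin (N+1) → Fin d → ℝ) :=
    fun j => {y | t ≤ pD d (N+1) j y} with hB_def
  have hB : ∀ j, MeasurableSet (B j) :=
    fun j => measurableSet_le measurable_const (measurable_pD j)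
  set E : Fin (N+1) → Set Ω := fun j => X ⁻¹' B j with hE_def
  have hE : ∀ j, MeasurableSet (E j) := fun j => hX (hB j)
  haveI : IsProbabilityMeasure (Measure.map (ξ 0) ℙ) :=
    Measure.isProbabilityMeasure_map (hmeas 0).aemeasurable
  have hlaw : Measure.map X ℙ = Measure.pi (fun _ : Fin (N+1) => Measure.map (ξ 0) ℙ) :=
    map_eq_pi ξ 0 hmeas hindep hident
  have hEeq : ∀ j, ℙ (E j) = ℙ (E (Fin.last N)) := by
    intro j
    set σ := Equiv.swap j (Fin.last N) with hσ_def
    have hσmeas : Measurable (fun y : Fin (N+1) → Fin d → ℝ => y ∘ σ) :=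
      measurable_pi_lambda _ fun i => measurable_pi_apply (σ i)
    have hpre : (fun y : Fin (N+1) → Fin d → ℝ => y ∘ σ) ⁻¹' (B (Fin.last N)) = B j := by
      ext y
      simp only [Set.mem_preimage, hB_def, Set.mem_setOf_eq]
      rw [pD_comp y σ (Fin.last N), hσ_def, Equiv.swap_apply_right]
    calc ℙ (E j) = Measure.map X ℙ (B j) := (Measure.map_apply hX (hB j)).symm
      _ = Measure.map X ℙ ((fun y : Fin (N+1) → Fin d → ℝ => y ∘ σ) ⁻¹' (B (Fin.last N))) := by
          rw [hpre]
      _ = Measure.map (fun y : Fin (N+1) → Fin d → ℝ => y ∘ σ) (Measure.map X ℙ)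
            (B (Fin.last N)) := (Measure.map_apply hσmeas (hB _)).symm
      _ = Measure.map X ℙ (B (Fin.last N)) := by
          rw [hlaw, perm_invariant]
      _ = ℙ (E (Fin.last N)) := Measure.map_apply hX (hB _)
  -- a.s. counting bound
  have hcount : ∀ᵐ ω ∂(ℙ : Measure Ω),
      ∑ j, (B j).indicator (fun _ => (1:ENNReal)) (X ω) ≤ (K : ENNReal) := by
    filter_upwards [hns] with ω hω
    obtain ⟨hTpd, _⟩ := key d N hN2 (X ω) (μN ω) (SN ω) (hμN ω) (hSN ω) hω
    have hcard : ((Finset.univ.filter (fun j => t ≤ pD d (N+1) j (X ω))).card : ℝ) * t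
        ≤ d := count_le (X ω) hTpd htpos
    have hcardK : (Finset.univ.filter (fun j => t ≤ pD d (N+1) j (X ω))).card ≤ K := by
      have h1 : ((Finset.univ.filter (fun j => t ≤ pD d (N+1) j (X ω))).card : ℝ) ≤ (d:ℝ)/t := by
        rw [le_div_iff₀ htpos]; exact hcard
      rw [hfrac] at h1
      have h2 : ((Finset.univ.filter (fun j => t ≤ pD d (N+1) j (X ω))).card : ℤ) ≤ k := by
        rw [hk_def]
        exact Int.le_floor.mpr (by exact_mod_cast h1)
      omega
    have hind : ∑ j, (B j).indicator (fun _ => (1:ENNReal)) (X ω)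
        = ((Finset.univ.filter (fun j => t ≤ pD d (N+1) j (X ω))).card : ENNReal) := by
      rw [← Finset.sum_boole]
      refine Finset.sum_congr rfl fun j _ => ?_
      simp [Set.indicator_apply, hB_def]
    rw [hind]
    exact_mod_cast Nat.cast_le.mpr hcardK
  -- sum of probabilities
  have hsum : ∑ j, ℙ (E j) ≤ (K : ENNReal) := by
    have h1 : ∀ j, ℙ (E j) = ∫⁻ ω, (B j).indicator (fun _ => (1:ENNReal)) (X ω) ∂ℙ := by
      intro j
      have : (fun ω => (B j).indicator (fun _ => (1:ENNReal)) (X ω))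
          = (E j).indicator (1 : Ω → ENNReal) := by
        funext ω
        simp [Set.indicator_apply, hE_def, Set.mem_preimage]
      rw [this, lintegral_indicator_one (hE j)]
    calc ∑ j, ℙ (E j) = ∑ j, ∫⁻ ω, (B j).indicator (fun _ => (1:ENNReal)) (X ω) ∂ℙ := by
          exact Finset.sum_congr rfl fun j _ => h1 j
      _ = ∫⁻ ω, ∑ j, (B j).indicator (fun _ => (1:ENNReal)) (X ω) ∂ℙ := by
          rw [lintegral_finset_sum]
          intro j _
          exact ((measurable_one.indicator (hB j)).comp hX)
      _ ≤ ∫⁻ _, (K : ENNReal) ∂ℙ := lintegral_mono_ae hcount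
      _ = (K : ENNReal) := by simp
  have hlastsum : (↑(N+1) : ENNReal) * ℙ (E (Fin.last N)) ≤ (K : ENNReal) := by
    have : ∑ j, ℙ (E j) = (↑(N+1) : ENNReal) * ℙ (E (Fin.last N)) := by
      rw [Finset.sum_congr rfl fun j _ => hEeq j, Finset.sum_const, Finset.card_univ,
        Fintype.card_fin, nsmul_eq_mul]
    rw [← this]
    exact hsum
  have hplast : ℙ (E (Fin.last N)) ≤ (K : ENNReal) / (↑(N+1) : ENNReal) := by
    rw [ENNReal.le_div_iff_mul_le (Or.inl (by simp)) (Or.inl (by simp))]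
    rw [mul_comm]
    exact hlastsum
  -- inclusion
  have hbad : ℙ {ω | ¬ IsUnit (SN ω)} = 0 := ae_iff.mp hns
  have hinc : {ω | lam ^ 2 ≤
        (ξ (Fin.last N) ω - μN ω) ⬝ᵥ ((SN ω)⁻¹ *ᵥ (ξ (Fin.last N) ω - μN ω))}
      ⊆ E (Fin.last N) ∪ {ω | ¬ IsUnit (SN ω)} := by
    intro ω hω
    by_cases hu : IsUnit (SN ω)
    · left
      obtain ⟨_, himp⟩ := key d N hN2 (X ω) (μN ω) (SN ω) (hμN ω) (hSN ω) hu
      exact himp lam hlam hω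
    · right; exact hu
  have hmain : ℙ {ω | lam ^ 2 ≤
        (ξ (Fin.last N) ω - μN ω) ⬝ᵥ ((SN ω)⁻¹ *ᵥ (ξ (Fin.last N) ω - μN ω))}
      ≤ ℙ (E (Fin.last N)) := by
    calc ℙ _ ≤ ℙ (E (Fin.last N) ∪ {ω | ¬ IsUnit (SN ω)}) := measure_mono hinc
      _ ≤ ℙ (E (Fin.last N)) + ℙ {ω | ¬ IsUnit (SN ω)} := measure_union_le _ _
      _ = ℙ (E (Fin.last N)) := by rw [hbad, add_zero]
  refine hmain.trans ?_
  have hof : ENNReal.ofReal (min 1 (((N:ℝ)+1)⁻¹ * (k:ℝ)))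
      = min (ENNReal.ofReal 1) (ENNReal.ofReal (((N:ℝ)+1)⁻¹ * (k:ℝ))) :=
    Monotone.map_min (fun a b h => ENNReal.ofReal_le_ofReal h)
  rw [hof]
  refine le_min ?_ ?_
  · simpa using prob_le_one
  · refine hplast.trans (le_of_eq ?_)
    have hkr : (k:ℝ) = (K:ℝ) := by exact_mod_cast hkK.symm
    rw [hkr, mul_comm, ← div_eq_mul_inv, ENNReal.ofReal_div_of_pos (by positivity)]
    have h1 : ENNReal.ofReal (K:ℝ) = (K : ENNReal) := ENNReal.ofReal_natCast K
    have h2 : ENNReal.ofReal ((N:ℝ)+1) = (↑(N+1) : ENNReal) := by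
      rw [show ((N:ℝ)+1) = ((N+1 : ℕ) : ℝ) by push_cast; ring, ENNReal.ofReal_natCast]
    rw [h1, h2]
end

section
/- Let d ≥ 1 and let N be an integer with N ≥ d. Let ξ_1, …, ξ_N, ξ_{N+1} be i.i.d. random vectors in ℝ^d, and assume the unbiased empirical covariance matrix S_N of the first N samples is almost surely nonsingular. Then for every real λ > 0, the probability that (ξ_{N+1} − μ_N)ᵀ S_N^{-1} (ξ_{N+1} − μ_N) ≥ λ² is at most min{1, d(N² − 1 + Nλ²)/(N²λ²)}. -/
open Matrix MeasureTheory ProbabilityTheory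

open Matrix MeasureTheory ProbabilityTheory Finset

namespace EmpCheb

variable {d : ℕ}

noncomputable def emean (N : ℕ) {d : ℕ} (x : Fin (N + 1) → Fin d → ℝ) : Fin d → ℝ :=
  (N : ℝ)⁻¹ • ∑ i : Fin N, x i.castSucc

noncomputable def ecov (N : ℕ) {d : ℕ} (x : Fin (N + 1) → Fin d → ℝ) :
    Matrix (Fin d) (Fin d) ℝ :=
  ((N : ℝ) - 1)⁻¹ •
    ∑ i : Fin N, vecMulVec (x i.castSucc - emean N x) (x i.castSucc - emean N x)

noncomputable def eQ (N : ℕ) {d : ℕ} (x : Fin (N + 1) → Fin d → ℝ) : ℝ :=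
  (x (Fin.last N) - emean N x) ⬝ᵥ ((ecov N x)⁻¹ *ᵥ (x (Fin.last N) - emean N x))

noncomputable def tmean (N : ℕ) {d : ℕ} (x : Fin (N + 1) → Fin d → ℝ) : Fin d → ℝ :=
  ((N : ℝ) + 1)⁻¹ • ∑ i, x i

noncomputable def tmat (N : ℕ) {d : ℕ} (x : Fin (N + 1) → Fin d → ℝ) :
    Matrix (Fin d) (Fin d) ℝ :=
  ∑ i, vecMulVec (x i - tmean N x) (x i - tmean N x)

lemma sum_shift {ι : Type*} (s : Finset ι) (f g : ι → ℝ) (a b : ℝ) :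
    ∑ i ∈ s, (f i - a) * (g i - b)
      = (∑ i ∈ s, f i * g i) - a * (∑ i ∈ s, g i) - b * (∑ i ∈ s, f i)
        + (s.card : ℝ) * (a * b) := by
  have h : ∀ i ∈ s, (f i - a) * (g i - b)
      = f i * g i - a * g i - b * f i + a * b := fun i _ => by ring
  rw [Finset.sum_congr rfl h]
  simp [Finset.sum_add_distrib, Finset.sum_sub_distrib, ← Finset.mul_sum,
    Finset.sum_const, nsmul_eq_mul]

lemma emean_comp {N : ℕ} (x : Fin (N + 1) → Fin d → ℝ) (σ : Equiv.Perm (Fin (N + 1)))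
    (j : Fin (N + 1)) (hσ : σ (Fin.last N) = j) :
    emean N (x ∘ σ) = (N : ℝ)⁻¹ • (∑ i, x i - x j) := by
  unfold emean
  congr 1
  have h := Fin.sum_univ_castSucc (f := fun i => x (σ i))
  rw [Equiv.sum_comp σ x, hσ] at h
  exact eq_sub_of_add_eq h.symm

lemma covsum_comp {N : ℕ} (x : Fin (N + 1) → Fin d → ℝ) (σ : Equiv.Perm (Fin (N + 1)))
    (j : Fin (N + 1)) (hσ : σ (Fin.last N) = j) (m : Fin d → ℝ) :
    ∑ i : Fin N, vecMulVec ((x ∘ σ) i.castSucc - m) ((x ∘ σ) i.castSucc - m)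
      = (∑ i : Fin (N + 1), vecMulVec (x i - m) (x i - m)) - vecMulVec (x j - m) (x j - m) := by
  have h := Fin.sum_univ_castSucc (f := fun i => vecMulVec (x (σ i) - m) (x (σ i) - m))
  rw [Equiv.sum_comp σ (fun k => vecMulVec (x k - m) (x k - m)), hσ] at h
  exact eq_sub_of_add_eq h.symm

lemma decomp {N : ℕ} (hN2 : 2 ≤ N) (x : Fin (N + 1) → Fin d → ℝ)
    (σ : Equiv.Perm (Fin (N + 1))) (j : Fin (N + 1)) (hσ : σ (Fin.last N) = j) :
    tmat N x = ((N : ℝ) - 1) • ecov N (x ∘ σ)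
      + (((N : ℝ) + 1) / (N : ℝ)) • vecMulVec (x j - tmean N x) (x j - tmean N x) := by
  have hn2 : (2 : ℝ) ≤ (N : ℝ) := by exact_mod_cast hN2
  have hn0 : (N : ℝ) ≠ 0 := by linarith
  have hn1 : (N : ℝ) - 1 ≠ 0 := by linarith
  have hn3 : (N : ℝ) + 1 ≠ 0 := by linarith
  unfold ecov
  rw [smul_smul, mul_inv_cancel₀ hn1, one_smul, emean_comp x σ j hσ, covsum_comp x σ j hσ]
  ext a b
  simp only [tmat, tmean, Matrix.add_apply, Matrix.sub_apply, Matrix.smul_apply,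
    Matrix.sum_apply, vecMulVec_apply, Pi.sub_apply, Pi.smul_apply, smul_eq_mul,
    Finset.sum_apply]
  rw [sum_shift, sum_shift]
  simp only [Finset.card_univ, Fintype.card_fin, Nat.cast_add, Nat.cast_one]
  field_simp
  ring

lemma vecMulVec_mulVec' (v w : Fin d → ℝ) (y : Fin d → ℝ) :
    vecMulVec v w *ᵥ y = (w ⬝ᵥ y) • v := by
  funext i
  simp [mulVec, vecMulVec_apply, dotProduct, Finset.mul_sum, mul_assoc, mul_comm, mul_left_comm]

lemma posSemidef_vecMulVec (v : Fin d → ℝ) : (vecMulVec v v).PosSemidef := by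
  refine Matrix.PosSemidef.of_dotProduct_mulVec_nonneg ?_ ?_
  · ext i j; simp [conjTranspose_apply, vecMulVec_apply, mul_comm]
  · intro y
    have h : star y ⬝ᵥ (vecMulVec v v *ᵥ y) = (v ⬝ᵥ y) * (v ⬝ᵥ y) := by
      rw [vecMulVec_mulVec', dotProduct_smul]
      simp only [star_trivial, smul_eq_mul]
      rw [mul_comm, dotProduct_comm]
    rw [h]
    exact mul_self_nonneg _

lemma posSemidef_smul' {c : ℝ} {A : Matrix (Fin d) (Fin d) ℝ} (hA : A.PosSemidef)
    (hc : 0 ≤ c) : (c • A).PosSemidef := by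
  refine Matrix.PosSemidef.of_dotProduct_mulVec_nonneg ?_ ?_
  · show (c • A)ᴴ = c • A
    ext i j
    have h := congrFun (congrFun hA.1 i) j
    simp only [conjTranspose_apply, star_trivial] at h ⊢
    simp [Matrix.smul_apply, h]
  · intro y
    rw [smul_mulVec, dotProduct_smul, smul_eq_mul]
    exact mul_nonneg hc (hA.dotProduct_mulVec_nonneg y)

lemma posSemidef_sum {ι : Type*} (s : Finset ι) (f : ι → Matrix (Fin d) (Fin d) ℝ)
    (h : ∀ i ∈ s, (f i).PosSemidef) : (∑ i ∈ s, f i).PosSemidef := by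
  classical
  induction s using Finset.induction_on with
  | empty => simpa using Matrix.PosSemidef.zero
  | insert a s hnotmem ih =>
    rw [Finset.sum_insert hnotmem]
    exact ((h _ (Finset.mem_insert_self _ _)).add
      (ih fun i hi => h i (Finset.mem_insert_of_mem hi)))

lemma posDef_of_psd_isUnit {A : Matrix (Fin d) (Fin d) ℝ} (hA : A.PosSemidef)
    (hu : IsUnit A) : A.PosDef := by
  refine Matrix.PosDef.of_dotProduct_mulVec_pos hA.1 (fun y hy => ?_)
  rcases lt_or_eq_of_le (hA.dotProduct_mulVec_nonneg y) with h | h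
  · exact h
  · exfalso
    have h0 : A *ᵥ y = 0 := (hA.dotProduct_mulVec_zero_iff y).mp h.symm
    have hinj : Function.Injective A.mulVec := Matrix.mulVec_injective_iff_isUnit.mpr hu
    exact hy (hinj (by rw [h0, Matrix.mulVec_zero]))

lemma inv_smul₀ {k : ℝ} (hk : k ≠ 0) (A : Matrix (Fin d) (Fin d) ℝ) :
    (k • A)⁻¹ = k⁻¹ • A⁻¹ := by
  by_cases h : IsUnit A.det
  · letI := invertibleOfNonzero hk
    rw [A.inv_smul k h, invOf_eq_inv]
  · have h2 : ¬ IsUnit (k • A).det := by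
      rw [Matrix.det_smul]
      simp only [isUnit_iff_ne_zero, ne_eq, not_not] at h ⊢
      simp [h]
    rw [Matrix.nonsing_inv_apply_not_isUnit _ h2, Matrix.nonsing_inv_apply_not_isUnit _ h,
      smul_zero]

lemma quadform_rank_one_update {A : Matrix (Fin d) (Fin d) ℝ} {v : Fin d → ℝ} {c : ℝ}
    (hA : IsUnit A.det) (hT : IsUnit (A + c • vecMulVec v v).det)
    (h1 : 1 + c * (v ⬝ᵥ (A⁻¹ *ᵥ v)) ≠ 0) :
    v ⬝ᵥ ((A + c • vecMulVec v v)⁻¹ *ᵥ v)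
      = (v ⬝ᵥ (A⁻¹ *ᵥ v)) / (1 + c * (v ⬝ᵥ (A⁻¹ *ᵥ v))) := by
  set s := v ⬝ᵥ (A⁻¹ *ᵥ v) with hs
  set T := A + c • vecMulVec v v with hTdef
  have hw : T *ᵥ ((1 + c * s)⁻¹ • (A⁻¹ *ᵥ v)) = v := by
    rw [Matrix.mulVec_smul]
    have hTv : T *ᵥ (A⁻¹ *ᵥ v) = (1 + c * s) • v := by
      rw [hTdef, Matrix.add_mulVec, Matrix.mulVec_mulVec, Matrix.mul_nonsing_inv _ hA,
        Matrix.one_mulVec, Matrix.smul_mulVec, vecMulVec_mulVec', ← hs]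
      funext i
      simp [Pi.smul_apply, smul_eq_mul]
      ring
    rw [hTv, smul_smul, inv_mul_cancel₀ h1, one_smul]
  have hTinv : T⁻¹ *ᵥ v = (1 + c * s)⁻¹ • (A⁻¹ *ᵥ v) := by
    conv_lhs => rw [← hw]
    rw [Matrix.mulVec_mulVec, Matrix.nonsing_inv_mul _ hT, Matrix.one_mulVec]
  rw [hTinv, dotProduct_smul, smul_eq_mul, ← hs, div_eq_inv_mul]

lemma sum_quadform_eq_card {m : ℕ} (v : Fin m → Fin d → ℝ)
    (hT : IsUnit (∑ j, vecMulVec (v j) (v j)).det) :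
    ∑ j, (v j ⬝ᵥ ((∑ k, vecMulVec (v k) (v k))⁻¹ *ᵥ v j)) = (d : ℝ) := by
  set T := ∑ k, vecMulVec (v k) (v k) with hTdef
  have h1 : ∀ j, v j ⬝ᵥ (T⁻¹ *ᵥ v j) = Matrix.trace (T⁻¹ * vecMulVec (v j) (v j)) := by
    intro j
    simp only [Matrix.trace, Matrix.diag, Matrix.mul_apply, vecMulVec_apply, dotProduct,
      mulVec, Finset.mul_sum]
    refine Finset.sum_congr rfl fun i _ => Finset.sum_congr rfl fun k _ => ?_
    ring
  calc ∑ j, (v j ⬝ᵥ (T⁻¹ *ᵥ v j)) = ∑ j, Matrix.trace (T⁻¹ * vecMulVec (v j) (v j)) := by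
        exact Finset.sum_congr rfl fun j _ => h1 j
    _ = Matrix.trace (T⁻¹ * T) := by rw [hTdef, Matrix.mul_sum, Matrix.trace_sum]
    _ = (d : ℝ) := by rw [Matrix.nonsing_inv_mul _ hT, Matrix.trace_one]; simp

lemma card_filter_le_of_sum {m : ℕ} (r : Fin m → ℝ) (hr : ∀ j, 0 ≤ r j) {t D : ℝ}
    (ht : 0 < t) (hsum : ∑ j, r j ≤ D) :
    ((Finset.univ.filter fun j => t ≤ r j).card : ℝ) * t ≤ D := by
  calc ((Finset.univ.filter fun j => t ≤ r j).card : ℝ) * t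
      = ∑ _j ∈ Finset.univ.filter fun j => t ≤ r j, t := by
        rw [Finset.sum_const, nsmul_eq_mul]
    _ ≤ ∑ j ∈ Finset.univ.filter fun j => t ≤ r j, r j := by
        refine Finset.sum_le_sum fun j hj => ?_
        exact (Finset.mem_filter.mp hj).2
    _ ≤ ∑ j, r j := by
        refine Finset.sum_le_sum_of_subset_of_nonneg (Finset.filter_subset _ _)
          fun j _ _ => hr j
    _ ≤ D := hsum

lemma posDef_smul' {c : ℝ} {A : Matrix (Fin d) (Fin d) ℝ} (hA : A.PosDef)
    (hc : 0 < c) : (c • A).PosDef := by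
  refine Matrix.PosDef.of_dotProduct_mulVec_pos ?_ ?_
  · show (c • A)ᴴ = c • A
    ext i j
    have h := congrFun (congrFun hA.1 i) j
    simp only [conjTranspose_apply, star_trivial] at h ⊢
    simp [Matrix.smul_apply, h]
  · intro y hy
    rw [smul_mulVec, dotProduct_smul, smul_eq_mul]
    exact mul_pos hc (hA.dotProduct_mulVec_pos hy)

lemma core (d N : ℕ) (hN2 : 2 ≤ N) (lam : ℝ) (hlam : 0 < lam)
    (x : Fin (N + 1) → Fin d → ℝ) (hx : IsUnit (ecov N x)) :
    ((Finset.univ.filter fun j : Fin (N + 1) =>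
        lam ^ 2 ≤ eQ N (x ∘ Equiv.swap j (Fin.last N))).card : ℝ)
      ≤ ((N : ℝ) + 1) * min 1
          ((d : ℝ) * ((N : ℝ) ^ 2 - 1 + (N : ℝ) * lam ^ 2) / ((N : ℝ) ^ 2 * lam ^ 2)) := by
  have hn2 : (2 : ℝ) ≤ (N : ℝ) := by exact_mod_cast hN2
  have hn0 : (N : ℝ) ≠ 0 := by linarith
  have hn1p : (0 : ℝ) < (N : ℝ) - 1 := by linarith
  have hn1 : (N : ℝ) - 1 ≠ 0 := ne_of_gt hn1p
  have hn3p : (0 : ℝ) < (N : ℝ) + 1 := by linarith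
  have hn3 : (N : ℝ) + 1 ≠ 0 := ne_of_gt hn3p
  set n : ℝ := (N : ℝ) with hn
  set c : ℝ := (n + 1) / n with hc
  have hcpos : 0 < c := by positivity
  set v : Fin (N + 1) → Fin d → ℝ := fun j => x j - tmean N x with hv
  have htmat : tmat N x = ∑ k, vecMulVec (v k) (v k) := rfl
  -- positive definiteness of tmat
  have hpsd_sum : ∀ (y : Fin (N+1) → Fin d → ℝ),
      (∑ i : Fin N, vecMulVec (y i.castSucc - emean N y) (y i.castSucc - emean N y)).PosSemidef :=
    fun y => posSemidef_sum _ _ (fun i _ => posSemidef_vecMulVec _)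
  have hpsd_ecov : ∀ (y : Fin (N+1) → Fin d → ℝ), (ecov N y).PosSemidef := fun y =>
    posSemidef_smul' (hpsd_sum y) (by positivity)
  have hpd_ecov : (ecov N x).PosDef := posDef_of_psd_isUnit (hpsd_ecov x) hx
  have hcomp_id : x ∘ ⇑(Equiv.refl (Fin (N + 1))) = x := rfl
  have hdec_last := decomp hN2 x (Equiv.refl _) (Fin.last N) rfl
  rw [hcomp_id] at hdec_last
  have hpd_A0 : (((n : ℝ) - 1) • ecov N x).PosDef := posDef_smul' hpd_ecov hn1p
  have hpd_T : (tmat N x).PosDef := by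
    rw [hdec_last]
    exact hpd_A0.add_posSemidef (posSemidef_smul' (posSemidef_vecMulVec _) hcpos.le)
  have hT_det : IsUnit (tmat N x).det := isUnit_iff_ne_zero.mpr hpd_T.det_pos.ne'
  set r : Fin (N + 1) → ℝ := fun j => v j ⬝ᵥ ((tmat N x)⁻¹ *ᵥ v j) with hr
  have hr0 : ∀ j, 0 ≤ r j := by
    intro j
    have h := hpd_T.inv.posSemidef.dotProduct_mulVec_nonneg (v j)
    simpa using h
  have hrsum : ∑ j, r j = (d : ℝ) := by
    have h := sum_quadform_eq_card v (htmat ▸ hT_det)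
    rw [hr]
    simpa [← htmat] using h
  set s₀ : ℝ := lam ^ 2 / ((n - 1) * c ^ 2) with hs₀
  have hs₀pos : 0 < s₀ := by positivity
  set t : ℝ := s₀ / (1 + c * s₀) with ht
  have h1s₀pos : 0 < 1 + c * s₀ := by positivity
  have htpos : 0 < t := by positivity
  -- the implication
  have himp : ∀ j, (lam ^ 2 ≤ eQ N (x ∘ Equiv.swap j (Fin.last N))) → t ≤ r j := by
    intro j hj
    set σ := Equiv.swap j (Fin.last N) with hσdef
    have hσ : σ (Fin.last N) = j := Equiv.swap_apply_right j (Fin.last N)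
    set B := ecov N (x ∘ σ) with hB
    have hwv : (x ∘ σ) (Fin.last N) - emean N (x ∘ σ) = c • v j := by
      rw [emean_comp x σ j hσ]
      funext a
      simp only [Function.comp_apply, hσ, Pi.sub_apply, Pi.smul_apply, smul_eq_mul,
        hv, tmean, Finset.sum_apply]
      rw [hc, hn]
      field_simp
      ring
    by_cases hUB : IsUnit B
    · have hpdB : B.PosDef := posDef_of_psd_isUnit (hpsd_ecov _) hUB
      set A := ((n : ℝ) - 1) • B with hA
      have hpdA : A.PosDef := posDef_smul' hpdB hn1p
      have hdetA : IsUnit A.det := isUnit_iff_ne_zero.mpr hpdA.det_pos.ne'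
      have hdecj : tmat N x = A + c • vecMulVec (v j) (v j) := decomp hN2 x σ j hσ
      set q := v j ⬝ᵥ (B⁻¹ *ᵥ v j) with hq
      have hq0 : 0 ≤ q := by
        have h := hpdB.inv.posSemidef.dotProduct_mulVec_nonneg (v j)
        simpa using h
      have hAinv : A⁻¹ = ((n : ℝ) - 1)⁻¹ • B⁻¹ := inv_smul₀ hn1 B
      have hsq : v j ⬝ᵥ (A⁻¹ *ᵥ v j) = (n - 1)⁻¹ * q := by
        rw [hAinv, Matrix.smul_mulVec, dotProduct_smul, smul_eq_mul]
      have hs'q : eQ N (x ∘ σ) = c ^ 2 * q := by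
        unfold eQ
        rw [← hB, hwv, Matrix.mulVec_smul, smul_dotProduct, dotProduct_smul,
          smul_eq_mul, smul_eq_mul]
        ring
      rw [hs'q] at hj
      set s := (n - 1)⁻¹ * q with hs
      have hs₀s : s₀ ≤ s := by
        rw [hs₀, div_le_iff₀ (by positivity)]
        calc lam ^ 2 ≤ c ^ 2 * q := hj
          _ = (n - 1)⁻¹ * q * ((n - 1) * c ^ 2) := by field_simp
      have hspos' : 0 < s := lt_of_lt_of_le hs₀pos hs₀s
      have hspos : 0 < 1 + c * s := by nlinarith
      have hrj : r j = s / (1 + c * s) := by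
        have hTd : IsUnit (A + c • vecMulVec (v j) (v j)).det := by
          rw [← hdecj]; exact hT_det
        have hne : 1 + c * (v j ⬝ᵥ (A⁻¹ *ᵥ v j)) ≠ 0 := by
          rw [hsq]; exact ne_of_gt hspos
        have h := quadform_rank_one_update (v := v j) (c := c) hdetA hTd hne
        rw [hsq] at h
        show v j ⬝ᵥ ((tmat N x)⁻¹ *ᵥ v j) = _
        rw [hdecj]
        exact h
      rw [hrj, ht, div_le_div_iff₀ h1s₀pos hspos]
      nlinarith [hs₀s, hcpos, hs₀pos]
    · exfalso
      have hdetB : ¬ IsUnit B.det := fun h => hUB ((Matrix.isUnit_iff_isUnit_det _).mpr h)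
      have h0 : B⁻¹ = 0 := Matrix.nonsing_inv_apply_not_isUnit _ hdetB
      have : eQ N (x ∘ σ) = 0 := by
        unfold eQ
        rw [← hB, h0]
        simp
      rw [this] at hj
      nlinarith
  have hsub : (Finset.univ.filter fun j : Fin (N + 1) =>
        lam ^ 2 ≤ eQ N (x ∘ Equiv.swap j (Fin.last N)))
      ⊆ Finset.univ.filter fun j => t ≤ r j := by
    intro j hj
    rw [Finset.mem_filter] at hj ⊢
    exact ⟨hj.1, himp j hj.2⟩
  have hcard2 := card_filter_le_of_sum r hr0 htpos (le_of_eq hrsum)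
  have hcard1 : ((Finset.univ.filter fun j : Fin (N + 1) =>
      lam ^ 2 ≤ eQ N (x ∘ Equiv.swap j (Fin.last N))).card : ℝ) ≤ (d : ℝ) / t := by
    rw [le_div_iff₀ htpos]
    refine le_trans ?_ hcard2
    exact mul_le_mul_of_nonneg_right (by exact_mod_cast Finset.card_le_card hsub) htpos.le
  have hcardN : ((Finset.univ.filter fun j : Fin (N + 1) =>
      lam ^ 2 ≤ eQ N (x ∘ Equiv.swap j (Fin.last N))).card : ℝ) ≤ n + 1 := by
    have h := Finset.card_filter_le (Finset.univ : Finset (Fin (N + 1)))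
      (fun j => lam ^ 2 ≤ eQ N (x ∘ Equiv.swap j (Fin.last N)))
    rw [Finset.card_univ, Fintype.card_fin] at h
    rw [hn]
    push_cast
    exact_mod_cast by exact_mod_cast Nat.cast_le.mpr h
  have hkey : (d : ℝ) / t = (n + 1) * ((d : ℝ) * (n ^ 2 - 1 + n * lam ^ 2) / (n ^ 2 * lam ^ 2)) := by
    rw [ht, hs₀, hc, div_div_eq_mul_div]
    have hlam0 : lam ≠ 0 := ne_of_gt hlam
    field_simp
    ring
  rcases min_cases (1 : ℝ) ((d : ℝ) * (n ^ 2 - 1 + n * lam ^ 2) / (n ^ 2 * lam ^ 2)) with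
    ⟨hmin, _⟩ | ⟨hmin, _⟩
  · rw [hmin, mul_one]; exact hcardN
  · rw [hmin, ← hkey]; exact hcard1

lemma continuous_emean (N : ℕ) :
    Continuous (fun y : Fin (N + 1) → Fin d → ℝ => emean N y) := by
  unfold emean
  have h : Continuous (fun y : Fin (N + 1) → Fin d → ℝ => ∑ i : Fin N, y i.castSucc) :=
    continuous_finset_sum _ fun i _ => continuous_apply i.castSucc
  exact h.const_smul ((N : ℝ)⁻¹)

lemma continuous_ecov (N : ℕ) :
    Continuous (fun y : Fin (N + 1) → Fin d → ℝ => ecov N y) := by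
  have h1 : ∀ (i : Fin N) (aa : Fin d), Continuous fun y : Fin (N + 1) → Fin d → ℝ =>
      y i.castSucc aa - emean N y aa := fun i aa =>
    ((continuous_apply aa).comp (continuous_apply _)).sub
      ((continuous_apply aa).comp (continuous_emean N))
  refine continuous_pi fun a => continuous_pi fun b => ?_
  have heq : (fun y : Fin (N + 1) → Fin d → ℝ => ecov N y a b)
      = fun y => ((N : ℝ) - 1)⁻¹ *
          ∑ i : Fin N, (y i.castSucc a - emean N y a) * (y i.castSucc b - emean N y b) := by
    funext y
    simp [ecov, Matrix.smul_apply, Matrix.sum_apply, vecMulVec_apply, Pi.sub_apply,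
      smul_eq_mul]
  show Continuous fun y : Fin (N + 1) → Fin d → ℝ => ecov N y a b
  rw [heq]
  exact continuous_const.mul (continuous_finset_sum _ fun i _ => (h1 i a).mul (h1 i b))

lemma measurable_eQ (N : ℕ) :
    Measurable (fun y : Fin (N + 1) → Fin d → ℝ => eQ N y) := by
  have hw : ∀ (a : Fin d), Measurable fun y : Fin (N + 1) → Fin d → ℝ =>
      (y (Fin.last N) - emean N y) a := fun a =>
    (((continuous_apply a).comp (continuous_apply _)).sub
      ((continuous_apply a).comp (continuous_emean N))).measurable
  have hdet : Measurable fun y : Fin (N + 1) → Fin d → ℝ => (ecov N y).det :=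
    ((continuous_ecov N).matrix_det).measurable
  have hadj : ∀ a b, Measurable fun y : Fin (N + 1) → Fin d → ℝ => (ecov N y).adjugate a b :=
    fun a b => ((continuous_apply b).comp
      ((continuous_apply a).comp ((continuous_ecov N).matrix_adjugate))).measurable
  have hinv : ∀ a b, Measurable fun y : Fin (N + 1) → Fin d → ℝ => (ecov N y)⁻¹ a b := by
    intro a b
    have heq : (fun y : Fin (N + 1) → Fin d → ℝ => (ecov N y)⁻¹ a b)
        = fun y => ((ecov N y).det)⁻¹ * (ecov N y).adjugate a b := by
      funext y
      rw [Matrix.inv_def, Ring.inverse_eq_inv']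
      simp [Matrix.smul_apply, smul_eq_mul]
    rw [heq]
    exact hdet.inv.mul (hadj a b)
  show Measurable fun y : Fin (N + 1) → Fin d → ℝ =>
    ∑ a, (y (Fin.last N) - emean N y) a
      * ((ecov N y)⁻¹ *ᵥ (y (Fin.last N) - emean N y)) a
  refine Finset.measurable_sum _ fun a _ => ?_
  refine (hw a).mul ?_
  show Measurable fun y : Fin (N + 1) → Fin d → ℝ =>
    ∑ b, (ecov N y)⁻¹ a b * (y (Fin.last N) - emean N y) b
  refine Finset.measurable_sum _ fun b _ => ?_
  exact (hinv a b).mul (hw b)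

lemma law_eq {Ω : Type*} [MeasureSpace Ω] [IsProbabilityMeasure (ℙ : Measure Ω)]
    {N : ℕ} (ξ : Fin (N + 1) → Ω → (Fin d → ℝ)) (hmeas : ∀ i, Measurable (ξ i))
    (hindep : ProbabilityTheory.iIndepFun ξ ℙ)
    (hident : ∀ i j, ProbabilityTheory.IdentDistrib (ξ i) (ξ j) ℙ ℙ)
    (σ : Equiv.Perm (Fin (N + 1))) :
    (ℙ : Measure Ω).map (fun ω => fun i => ξ (σ i) ω)
      = Measure.pi (fun _ : Fin (N + 1) => (ℙ : Measure Ω).map (ξ (Fin.last N))) := by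
  haveI : IsProbabilityMeasure ((ℙ : Measure Ω).map (ξ (Fin.last N))) :=
    Measure.isProbabilityMeasure_map (hmeas _).aemeasurable
  refine (Measure.pi_eq fun s hs => ?_).symm
  rw [Measure.map_apply (measurable_pi_lambda _ fun i => hmeas (σ i))
    (MeasurableSet.univ_pi hs)]
  have hpre : (fun ω => fun i => ξ (σ i) ω) ⁻¹' (Set.univ.pi s)
      = ⋂ k ∈ Finset.univ, ξ k ⁻¹' (s (σ.symm k)) := by
    ext ω
    simp only [Set.mem_preimage, Set.mem_pi, Set.mem_univ, forall_true_left,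
      Set.mem_iInter, Finset.mem_univ, true_implies]
    constructor
    · intro h k
      have := h (σ.symm k)
      simpa using this
    · intro h i
      have := h (σ i)
      simpa using this
  rw [hpre, hindep.measure_inter_preimage_eq_mul Finset.univ
    (sets := fun k => s (σ.symm k)) (fun k _ => hs (σ.symm k))]
  have hfac : ∀ k : Fin (N + 1), (ℙ : Measure Ω) (ξ k ⁻¹' s (σ.symm k))
      = (ℙ : Measure Ω).map (ξ (Fin.last N)) (s (σ.symm k)) := by
    intro k
    rw [← (hident k (Fin.last N)).map_eq, Measure.map_apply (hmeas k) (hs _)]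
  rw [Finset.prod_congr rfl fun k _ => hfac k]
  exact Equiv.prod_comp σ.symm
    (fun i => (ℙ : Measure Ω).map (ξ (Fin.last N)) (s i))

end EmpCheb


/-- **Remark after Theorem 1.** Empirical multivariate Chebyshev inequality: given `N+1`
i.i.d. random vectors in `ℝ^d` (with `N ≥ d ≥ 1`) whose unbiased empirical covariance `S_N` of
the first `N` samples is a.s. nonsingular, for every `λ > 0` the probability that
`(ξ_{N+1} − μ_N)ᵀ S_N⁻¹ (ξ_{N+1} − μ_N) ≥ λ²` is at most
`min{1, d(N²−1+Nλ²)/(N²λ²)}`. -/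
theorem empirical_multivariate_chebyshev_simplified {Ω : Type*} [MeasureSpace Ω]
    [IsProbabilityMeasure (ℙ : Measure Ω)]
    (d N : ℕ) (hd : 1 ≤ d) (hN : d ≤ N)
    (ξ : Fin (N + 1) → Ω → (Fin d → ℝ))
    (hmeas : ∀ i, Measurable (ξ i))
    (hindep : iIndepFun ξ ℙ)
    (hident : ∀ i j, IdentDistrib (ξ i) (ξ j) ℙ ℙ)
    (μN : Ω → (Fin d → ℝ))
    (hμN : ∀ ω, μN ω = (N : ℝ)⁻¹ • ∑ i : Fin N, ξ i.castSucc ω)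
    (SN : Ω → Matrix (Fin d) (Fin d) ℝ)
    (hSN : ∀ ω, SN ω = ((N : ℝ) - 1)⁻¹ •
      ∑ i : Fin N, vecMulVec (ξ i.castSucc ω - μN ω) (ξ i.castSucc ω - μN ω))
    (hns : ∀ᵐ ω ∂(ℙ : Measure Ω), IsUnit (SN ω))
    (lam : ℝ) (hlam : 0 < lam) :
    ℙ {ω | lam ^ 2 ≤
        (ξ (Fin.last N) ω - μN ω) ⬝ᵥ ((SN ω)⁻¹ *ᵥ (ξ (Fin.last N) ω - μN ω))}
      ≤ ENNReal.ofReal (min 1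
          ((d : ℝ) * ((N : ℝ) ^ 2 - 1 + (N : ℝ) * lam ^ 2)
            / ((N : ℝ) ^ 2 * lam ^ 2))) := by
  classical
  have hPne : (ℙ : Measure Ω) ≠ 0 := by
    intro h
    have h1 := measure_univ (μ := (ℙ : Measure Ω))
    rw [h] at h1
    simp at h1
  haveI : Filter.NeBot (ae (ℙ : Measure Ω)) := MeasureTheory.ae_neBot.mpr hPne
  -- N ≥ 2
  have hN2 : 2 ≤ N := by
    by_contra hcon
    push_neg at hcon
    have hN1 : N = 1 := by omega
    obtain ⟨ω, hω⟩ := hns.exists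
    have h0 : SN ω = 0 := by
      rw [hSN ω]
      have hz : ((N : ℝ) - 1)⁻¹ = 0 := by rw [hN1]; norm_num
      rw [hz, zero_smul]
    rw [h0] at hω
    haveI : Nonempty (Fin d) := ⟨⟨0, hd⟩⟩
    have hdet := (Matrix.isUnit_iff_isUnit_det _).mp hω
    rw [Matrix.det_zero] at hdet
    simp [isUnit_zero_iff] at hdet
  -- setup
  set X : Ω → (Fin (N + 1) → Fin d → ℝ) := fun ω i => ξ i ω with hX
  have hXm : Measurable X := measurable_pi_lambda _ hmeas
  set G : Set (Fin (N + 1) → Fin d → ℝ) := {y | lam ^ 2 ≤ EmpCheb.eQ N y} with hG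
  have hGm : MeasurableSet G := measurableSet_le measurable_const (EmpCheb.measurable_eQ N)
  have hmean_eq : ∀ ω, EmpCheb.emean N (X ω) = μN ω := fun ω => (hμN ω).symm
  have hcov_eq : ∀ ω, EmpCheb.ecov N (X ω) = SN ω := by
    intro ω
    rw [hSN ω, ← hmean_eq ω]
    rfl
  have hQ : ∀ ω, EmpCheb.eQ N (X ω)
      = (ξ (Fin.last N) ω - μN ω) ⬝ᵥ ((SN ω)⁻¹ *ᵥ (ξ (Fin.last N) ω - μN ω)) := by
    intro ω
    unfold EmpCheb.eQ
    rw [hmean_eq ω, hcov_eq ω]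
  have hset : {ω | lam ^ 2 ≤
      (ξ (Fin.last N) ω - μN ω) ⬝ᵥ ((SN ω)⁻¹ *ᵥ (ξ (Fin.last N) ω - μN ω))}
      = X ⁻¹' G := by
    ext ω
    simp only [Set.mem_setOf_eq, Set.mem_preimage, hG, hQ ω]
  -- events
  set Bset : Fin (N + 1) → Set Ω := fun j =>
    (fun ω => fun i => ξ (Equiv.swap j (Fin.last N) i) ω) ⁻¹' G with hBdef
  have hBm : ∀ j, MeasurableSet (Bset j) :=
    fun j => (measurable_pi_lambda _ fun i => hmeas _) hGm
  have hlaw : ∀ j, (ℙ : Measure Ω) (Bset j) = (ℙ : Measure Ω) (X ⁻¹' G) := by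
    intro j
    have h1 := EmpCheb.law_eq ξ hmeas hindep hident (Equiv.swap j (Fin.last N))
    have h2 := EmpCheb.law_eq ξ hmeas hindep hident (Equiv.refl _)
    have e1 : (ℙ : Measure Ω) (Bset j)
        = (ℙ : Measure Ω).map (fun ω => fun i => ξ (Equiv.swap j (Fin.last N) i) ω) G := by
      rw [Measure.map_apply (measurable_pi_lambda _ fun i => hmeas _) hGm]
    have e2 : (ℙ : Measure Ω) (X ⁻¹' G)
        = (ℙ : Measure Ω).map (fun ω => fun i => ξ ((Equiv.refl (Fin (N + 1))) i) ω) G := by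
      rw [Measure.map_apply (measurable_pi_lambda _ fun i => hmeas _) hGm]
      rfl
    rw [e1, e2, h1, h2]
  -- pointwise bound
  set bnd : ℝ := (d : ℝ) * ((N : ℝ) ^ 2 - 1 + (N : ℝ) * lam ^ 2) / ((N : ℝ) ^ 2 * lam ^ 2)
    with hbnd
  set K : ℝ := ((N : ℝ) + 1) * min 1 bnd with hK
  have hptwise : ∀ᵐ ω ∂(ℙ : Measure Ω),
      ∑ j : Fin (N + 1), (Bset j).indicator (1 : Ω → ENNReal) ω
        ≤ ENNReal.ofReal K := by
    filter_upwards [hns] with ω hω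
    have hxunit : IsUnit (EmpCheb.ecov N (X ω)) := by rw [hcov_eq ω]; exact hω
    have hcore := EmpCheb.core d N hN2 lam hlam (X ω) hxunit
    have hind : ∀ j : Fin (N + 1), (Bset j).indicator (1 : Ω → ENNReal) ω
        = if lam ^ 2 ≤ EmpCheb.eQ N (X ω ∘ Equiv.swap j (Fin.last N)) then 1 else 0 := by
      intro j
      by_cases hj : ω ∈ Bset j
      · have hj' : lam ^ 2 ≤ EmpCheb.eQ N (X ω ∘ ⇑(Equiv.swap j (Fin.last N))) := hj
        rw [Set.indicator_of_mem hj, if_pos hj', Pi.one_apply]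
      · have hj' : ¬ lam ^ 2 ≤ EmpCheb.eQ N (X ω ∘ ⇑(Equiv.swap j (Fin.last N))) :=
          fun h => hj h
        rw [Set.indicator_of_notMem hj, if_neg hj']
    rw [Finset.sum_congr rfl fun j _ => hind j, Finset.sum_boole]
    have hle : (((Finset.univ.filter fun j : Fin (N + 1) =>
        lam ^ 2 ≤ EmpCheb.eQ N (X ω ∘ Equiv.swap j (Fin.last N))).card : ℝ)) ≤ K := hcore
    calc ((Finset.univ.filter fun j : Fin (N + 1) =>
          lam ^ 2 ≤ EmpCheb.eQ N (X ω ∘ Equiv.swap j (Fin.last N))).card : ENNReal)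
        = ENNReal.ofReal ((Finset.univ.filter fun j : Fin (N + 1) =>
          lam ^ 2 ≤ EmpCheb.eQ N (X ω ∘ Equiv.swap j (Fin.last N))).card : ℝ) := by
          rw [ENNReal.ofReal_natCast]
      _ ≤ ENNReal.ofReal K := ENNReal.ofReal_le_ofReal hle
  -- integrate
  have hsum : ∑ j : Fin (N + 1), (ℙ : Measure Ω) (Bset j) ≤ ENNReal.ofReal K := by
    have h1 : ∀ j : Fin (N + 1), (ℙ : Measure Ω) (Bset j)
        = ∫⁻ ω, (Bset j).indicator (1 : Ω → ENNReal) ω ∂(ℙ : Measure Ω) := by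
      intro j
      rw [lintegral_indicator_one (hBm j)]
    rw [Finset.sum_congr rfl fun j _ => h1 j,
      ← lintegral_finset_sum _ (fun j _ => measurable_one.indicator (hBm j))]
    calc ∫⁻ ω, ∑ j : Fin (N + 1), (Bset j).indicator (1 : Ω → ENNReal) ω ∂ℙ
        ≤ ∫⁻ _ω, ENNReal.ofReal K ∂(ℙ : Measure Ω) := lintegral_mono_ae hptwise
      _ = ENNReal.ofReal K := by rw [lintegral_const, measure_univ, mul_one]
  have hcount : ((N : ENNReal) + 1) * (ℙ : Measure Ω) (X ⁻¹' G) ≤ ENNReal.ofReal K := by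
    have h2 : ∑ j : Fin (N + 1), (ℙ : Measure Ω) (Bset j)
        = ((N : ENNReal) + 1) * (ℙ : Measure Ω) (X ⁻¹' G) := by
      rw [Finset.sum_congr rfl fun j _ => hlaw j, Finset.sum_const, Finset.card_univ,
        Fintype.card_fin, nsmul_eq_mul]
      push_cast
      ring
    rw [← h2]
    exact hsum
  have hKsplit : ENNReal.ofReal K = ((N : ENNReal) + 1) * ENNReal.ofReal (min 1 bnd) := by
    rw [hK, ENNReal.ofReal_mul (by positivity)]
    congr 1
    rw [show ((N : ℝ) + 1) = (((N + 1 : ℕ)) : ℝ) by push_cast; ring, ENNReal.ofReal_natCast]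
    push_cast
    ring
  rw [hset]
  rw [hKsplit] at hcount
  have hfin : ((N : ENNReal) + 1) ≠ 0 := by simp
  have hfin2 : ((N : ENNReal) + 1) ≠ ⊤ := by simp [ENNReal.natCast_ne_top]
  exact (ENNReal.mul_le_mul_iff_right hfin hfin2).mp hcount
end

section
/- Let d ≥ 1 and N ≥ 2, and let x_1, …, x_{N+1} ∈ ℝ^d. If the unbiased empirical covariance S_N of the first N points is positive definite, then the biased empirical covariance Σ_{N+1} of all N+1 points satisfies Σ_{N+1} ⪰ ((N−1)/(N+1))·S_N in the Loewner order; in particular Σ_{N+1} is positive definite (hence nonsingular). -/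
open Matrix

lemma psd_vecMulVec {d : ℕ} (v : Fin d → ℝ) : (vecMulVec v v).PosSemidef := by
  rw [posSemidef_iff_dotProduct_mulVec]
  constructor
  · ext i j
    simp [vecMulVec, conjTranspose, mul_comm]
  · intro y
    have h : (vecMulVec v v) *ᵥ y = (v ⬝ᵥ y) • v := by
      ext i
      simp [vecMulVec, mulVec, dotProduct, Finset.sum_mul, Finset.mul_sum]
      exact Finset.sum_congr rfl fun j _ => by ring
    rw [h]
    simp only [star_trivial, dotProduct_smul]
    have : v ⬝ᵥ y = y ⬝ᵥ v := dotProduct_comm _ _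
    rw [smul_eq_mul, this]
    exact mul_self_nonneg _

lemma psd_smul {d : ℕ} {A : Matrix (Fin d) (Fin d) ℝ} {c : ℝ} (hc : 0 ≤ c)
    (hA : A.PosSemidef) : (c • A).PosSemidef := by
  rw [posSemidef_iff_dotProduct_mulVec]
  constructor
  · rw [IsHermitian, conjTranspose_smul, hA.1.eq, star_trivial]
  · intro y
    rw [smul_mulVec, dotProduct_smul, smul_eq_mul]
    exact mul_nonneg hc ((posSemidef_iff_dotProduct_mulVec.mp hA).2 y)

lemma pd_smul {d : ℕ} {A : Matrix (Fin d) (Fin d) ℝ} {c : ℝ} (hc : 0 < c)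
    (hA : A.PosDef) : (c • A).PosDef := by
  rw [posDef_iff_dotProduct_mulVec]
  constructor
  · rw [IsHermitian, conjTranspose_smul, hA.1.eq, star_trivial]
  · intro y hy
    rw [smul_mulVec, dotProduct_smul, smul_eq_mul]
    exact mul_pos hc ((posDef_iff_dotProduct_mulVec.mp hA).2 hy)

lemma key_sum {N : ℕ} (a b : Fin N → ℝ) (p q m n : ℝ)
    (ha : ∑ i, a i = N * m) (hb : ∑ i, b i = N * n) :
    ∑ i, (a i - p) * (b i - q) = ∑ i, (a i - m) * (b i - n) + N * ((m - p) * (n - q)) := by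
  have h : ∀ i : Fin N, (a i - p) * (b i - q)
      = (a i - m) * (b i - n) + (a i * (n - q) + b i * (m - p) + (p * q - m * n)) := by
    intro i; ring
  rw [Finset.sum_congr rfl fun i _ => h i]
  rw [Finset.sum_add_distrib, Finset.sum_add_distrib, Finset.sum_add_distrib,
    ← Finset.sum_mul, ← Finset.sum_mul, Finset.sum_const, ha, hb]
  simp only [Finset.card_univ, Fintype.card_fin, nsmul_eq_mul]
  ring

/-- If the unbiased empirical covariance `S_N` of the first `N` points is
positive definite, then the biased empirical covariance `Σ_{N+1}` of all `N+1` points satisfies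
`Σ_{N+1} ⪰ ((N−1)/(N+1))·S_N` in the Loewner order; in particular `Σ_{N+1}` is positive
definite, hence nonsingular. -/
theorem biased_covariance_posdef (d N : ℕ) (hd : 1 ≤ d) (hN : 2 ≤ N)
    (x : Fin (N + 1) → (Fin d → ℝ))
    (μN μN1 : Fin d → ℝ)
    (hμN : μN = (N : ℝ)⁻¹ • ∑ i : Fin N, x i.castSucc)
    (hμN1 : μN1 = ((N : ℝ) + 1)⁻¹ • ∑ i : Fin (N + 1), x i)
    (SN SigmaN1 : Matrix (Fin d) (Fin d) ℝ)
    (hSN : SN = ((N : ℝ) - 1)⁻¹ •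
      ∑ i : Fin N, vecMulVec (x i.castSucc - μN) (x i.castSucc - μN))
    (hSigmaN1 : SigmaN1 = ((N : ℝ) + 1)⁻¹ •
      ∑ i : Fin (N + 1), vecMulVec (x i - μN1) (x i - μN1))
    (hpos : SN.PosDef) :
    (SigmaN1 - (((N : ℝ) - 1) / ((N : ℝ) + 1)) • SN).PosSemidef
      ∧ SigmaN1.PosDef ∧ IsUnit SigmaN1 := by
  have hN2 : (2 : ℝ) ≤ (N : ℝ) := by exact_mod_cast hN
  have hN0 : (N : ℝ) ≠ 0 := by linarith
  have hNm1 : (0 : ℝ) < (N : ℝ) - 1 := by linarith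
  have hNp1 : (0 : ℝ) < (N : ℝ) + 1 := by positivity
  have hμNk : ∀ k, ∑ i : Fin N, x i.castSucc k = N * μN k := by
    intro k
    rw [hμN]
    simp only [Pi.smul_apply, Finset.sum_apply, smul_eq_mul]
    rw [← mul_assoc, mul_inv_cancel₀ hN0, one_mul]
  have hmain : SigmaN1 - (((N : ℝ) - 1) / ((N : ℝ) + 1)) • SN
      = ((N : ℝ) + 1)⁻¹ • ((N : ℝ) • vecMulVec (μN - μN1) (μN - μN1)
        + vecMulVec (x (Fin.last N) - μN1) (x (Fin.last N) - μN1)) := by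
    rw [hSigmaN1, hSN]
    ext k l
    simp only [Matrix.sub_apply, Matrix.smul_apply, Matrix.add_apply, Matrix.sum_apply,
      vecMulVec_apply, Pi.sub_apply, smul_eq_mul]
    rw [Fin.sum_univ_castSucc]
    rw [key_sum (fun i => x i.castSucc k) (fun i => x i.castSucc l)
      (μN1 k) (μN1 l) (μN k) (μN l) (hμNk k) (hμNk l)]
    field_simp
    ring
  have hPSD : (SigmaN1 - (((N : ℝ) - 1) / ((N : ℝ) + 1)) • SN).PosSemidef := by
    rw [hmain]
    exact psd_smul (inv_nonneg.mpr hNp1.le)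
      ((psd_smul (Nat.cast_nonneg N) (psd_vecMulVec _)).add (psd_vecMulVec _))
  have hcpos : (0 : ℝ) < ((N : ℝ) - 1) / ((N : ℝ) + 1) := div_pos hNm1 hNp1
  have hPD : SigmaN1.PosDef := by
    have heq : SigmaN1 = (SigmaN1 - (((N : ℝ) - 1) / ((N : ℝ) + 1)) • SN)
        + (((N : ℝ) - 1) / ((N : ℝ) + 1)) • SN := by
      rw [sub_add_cancel]
    rw [heq]
    exact Matrix.PosDef.posSemidef_add hPSD (pd_smul hcpos hpos)
  exact ⟨hPSD, hPD, hPD.isUnit⟩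
end

section
/- Let d ≥ 1 and N ≥ 1, let ξ_1, …, ξ_{N+1} be i.i.d. random vectors in ℝ^d, and let A ⊆ (ℝ^d)^{N+1} be a measurable set. Suppose there is an integer m ≥ 0 such that for every tuple (x_1, …, x_{N+1}) ∈ (ℝ^d)^{N+1}, the number of indices i ∈ {1, …, N+1} for which the tuple obtained by swapping x_i into the last position belongs to A is at most m. Then P((ξ_1, …, ξ_{N+1}) ∈ A) ≤ m/(N+1). -/
open MeasureTheory ProbabilityTheory

/-- Exchangeability counting bound: if `ξ_1, …, ξ_{N+1}` are i.i.d. random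
vectors in `ℝ^d` and `A` is a measurable set of tuples such that, for every tuple, at most `m`
of the `N+1` tuples obtained by swapping one coordinate into the last position belong to `A`,
then `P((ξ_1, …, ξ_{N+1}) ∈ A) ≤ m/(N+1)`. -/
theorem exchangeability_counting_bound {Ω : Type*} [MeasureSpace Ω]
    [IsProbabilityMeasure (ℙ : Measure Ω)]
    (d N : ℕ) (hd : 1 ≤ d) (hN : 1 ≤ N)
    (ξ : Fin (N + 1) → Ω → (Fin d → ℝ))
    (hmeas : ∀ i, Measurable (ξ i))
    (hindep : iIndepFun ξ ℙ)
    (hident : ∀ i j, IdentDistrib (ξ i) (ξ j) ℙ ℙ)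
    (A : Set (Fin (N + 1) → (Fin d → ℝ))) (hA : MeasurableSet A)
    (m : ℕ)
    (hcount : ∀ x : Fin (N + 1) → (Fin d → ℝ),
      Set.ncard {i : Fin (N + 1) | (x ∘ Equiv.swap i (Fin.last N)) ∈ A} ≤ m) :
    ℙ {ω | (fun i => ξ i ω) ∈ A} ≤ (m : ENNReal) / ((N : ENNReal) + 1) := by
  set μ0 : Measure (Fin d → ℝ) := Measure.map (ξ 0) ℙ with hμ0
  have hμ0i : ∀ i, Measure.map (ξ i) ℙ = μ0 := fun i => (hident i 0).map_eq
  have hprob : IsProbabilityMeasure μ0 :=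
    Measure.isProbabilityMeasure_map (hmeas 0).aemeasurable
  have hjm : Measurable (fun ω i => ξ i ω) := measurable_pi_lambda _ hmeas
  set P : Measure (Fin (N+1) → Fin d → ℝ) := Measure.map (fun ω i => ξ i ω) ℙ with hP
  have hPpi : Measure.pi (fun _ : Fin (N+1) => μ0) = P := by
    refine Measure.pi_eq (fun s hs => ?_)
    rw [hP, Measure.map_apply hjm (MeasurableSet.univ_pi hs)]
    have heq : (fun ω i => ξ i ω) ⁻¹' (Set.pi Set.univ s) = ⋂ i, ξ i ⁻¹' s i := by
      ext ω; simp [Set.mem_pi]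
    rw [heq, hindep.meas_iInter (fun i => ⟨s i, hs i, rfl⟩)]
    exact Finset.prod_congr rfl fun i _ => by
      rw [← hμ0i i, Measure.map_apply (hmeas i) (hs i)]
  have hswap : ∀ σ : Equiv.Perm (Fin (N+1)),
      P.map (fun x => x ∘ σ) = P := by
    intro σ
    have h1 : MeasurePreserving
        ((MeasurableEquiv.piCongrLeft (fun _ : Fin (N+1) => (Fin d → ℝ)) σ).symm)
        (Measure.pi (fun _ => μ0)) (Measure.pi (fun _ => μ0)) :=
      (measurePreserving_piCongrLeft (fun _ => μ0) σ).symm _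
    have h2 : ⇑(MeasurableEquiv.piCongrLeft (fun _ : Fin (N+1) => (Fin d → ℝ)) σ).symm
        = fun x => x ∘ σ := by
      ext x j
      simp [MeasurableEquiv.piCongrLeft, Equiv.piCongrLeft]
    rw [← hPpi, ← h2, h1.map_eq]
  have hmswap : ∀ i : Fin (N+1),
      Measurable (fun x : Fin (N+1) → Fin d → ℝ => x ∘ Equiv.swap i (Fin.last N)) := by
    intro i
    exact measurable_pi_lambda _ (fun j => measurable_pi_apply (Equiv.swap i (Fin.last N) j))
  have hmeasA : ∀ i : Fin (N+1), MeasurableSet {x : Fin (N+1) → Fin d → ℝ |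
      (x ∘ Equiv.swap i (Fin.last N)) ∈ A} := fun i => (hmswap i) hA
  have hAi : ∀ i : Fin (N+1),
      P {x | (x ∘ Equiv.swap i (Fin.last N)) ∈ A} = P A := by
    intro i
    calc P {x | (x ∘ Equiv.swap i (Fin.last N)) ∈ A}
        = P.map (fun x => x ∘ Equiv.swap i (Fin.last N)) A := by
          rw [Measure.map_apply (hmswap i) hA]; rfl
      _ = P A := by rw [hswap (Equiv.swap i (Fin.last N))]
  have hPprob : IsProbabilityMeasure P := Measure.isProbabilityMeasure_map hjm.aemeasurable
  classical
  have hsum : ((N+1 : ℕ) : ENNReal) * P A ≤ m := by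
    calc ((N+1 : ℕ) : ENNReal) * P A
        = ∑ _i : Fin (N+1), P A := by
          simp [Finset.sum_const]
      _ = ∑ i : Fin (N+1), P {x | (x ∘ Equiv.swap i (Fin.last N)) ∈ A} := by
          exact Finset.sum_congr rfl fun i _ => (hAi i).symm
      _ = ∫⁻ x, ∑ i : Fin (N+1),
            Set.indicator {x | (x ∘ Equiv.swap i (Fin.last N)) ∈ A} 1 x ∂P := by
          rw [lintegral_finset_sum _ (fun i _ => measurable_one.indicator (hmeasA i))]
          exact Finset.sum_congr rfl fun i _ => (lintegral_indicator_one (hmeasA i)).symm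
      _ ≤ ∫⁻ _, (m : ENNReal) ∂P := by
          refine lintegral_mono fun x => ?_
          have h1 : ∑ i : Fin (N+1),
              Set.indicator {x | (x ∘ Equiv.swap i (Fin.last N)) ∈ A} 1 x
              = ((Finset.univ.filter
                  (fun i : Fin (N+1) => (x ∘ Equiv.swap i (Fin.last N)) ∈ A)).card : ENNReal) := by
            rw [Finset.card_eq_sum_ones, Nat.cast_sum, Finset.sum_filter]
            exact Finset.sum_congr rfl fun i _ => by
              by_cases h : (x ∘ Equiv.swap i (Fin.last N)) ∈ A <;> simp [Set.indicator, h]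
          have h2 : (Finset.univ.filter
              (fun i : Fin (N+1) => (x ∘ Equiv.swap i (Fin.last N)) ∈ A)).card
              = Set.ncard {i : Fin (N+1) | (x ∘ Equiv.swap i (Fin.last N)) ∈ A} := by
            rw [Set.ncard_eq_toFinset_card']
            congr 1
            ext i
            simp
          rw [h1, h2]
          exact Nat.cast_le.mpr (hcount x)
      _ = m := by simp
  have hPA : ℙ {ω | (fun i => ξ i ω) ∈ A} = P A := by
    rw [hP, Measure.map_apply hjm hA]; rfl
  rw [hPA, ENNReal.le_div_iff_mul_le (by simp) (by simp)]
  have hc : ((N : ENNReal) + 1) = ((N+1 : ℕ) : ENNReal) := by push_cast; ring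
  rw [mul_comm, hc]
  exact hsum
end
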